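/- Suppose S ⊆ ℝ^n and T ⊆ ℝ^m are compact sets with dim_F(S) < n and dim_F(T) < m. Then dim_F(S × T) = min{ dim_F(S), dim_F(T) }, where S × T ⊆ ℝ^{n+m}. -/

import Mathlib

open MeasureTheory Real Set

/-- The Fourier transform of a measure on `ℝ^n`:  `μ̂(ξ) = ∫ e^{−2πi x·ξ} dμ(x)`. -/
noncomputable def mft {n : ℕ} (μ : Measure (EuclideanSpace ℝ (Fin n)))
    (ξ : EuclideanSpace ℝ (Fin n)) : ℂ :=
  ∫ x, Complex.exp (((-2 * Real.pi * inner ℝ x ξ : ℝ) : ℂ) * Complex.I) ∂μ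

/-- The Fourier dimension of a set `A ⊆ ℝ^n`. -/
noncomputable def fourierDim {n : ℕ} (A : Set (EuclideanSpace ℝ (Fin n))) : ℝ :=
  sSup {s : ℝ | 0 ≤ s ∧ s ≤ (n : ℝ) ∧
    ∃ μ : Measure (EuclideanSpace ℝ (Fin n)), IsFiniteMeasure μ ∧ μ ≠ 0 ∧ μ Aᶜ = 0 ∧
      ∃ C : ℝ, ∀ ξ : EuclideanSpace ℝ (Fin n), ‖ξ‖ ^ (s / 2) * ‖mft μ ξ‖ ≤ C}

/-- The canonical identification of `ℝ^n × ℝ^m` with `ℝ^{n+m}`. -/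
noncomputable def prodMap (n m : ℕ)
    (p : EuclideanSpace ℝ (Fin n) × EuclideanSpace ℝ (Fin m)) :
    EuclideanSpace ℝ (Fin (n + m)) :=
  (EuclideanSpace.equiv (Fin (n + m)) ℝ).symm
    (Fin.append (EuclideanSpace.equiv (Fin n) ℝ p.1) (EuclideanSpace.equiv (Fin m) ℝ p.2))

variable {n m : ℕ}


lemma prodMap_apply_castAdd (p : EuclideanSpace ℝ (Fin n) × EuclideanSpace ℝ (Fin m)) (i : Fin n) :
    prodMap n m p (Fin.castAdd m i) = p.1 i := by
  simp [prodMap, Fin.append_left, EuclideanSpace.equiv]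

lemma prodMap_apply_natAdd (p : EuclideanSpace ℝ (Fin n) × EuclideanSpace ℝ (Fin m)) (j : Fin m) :
    prodMap n m p (Fin.natAdd n j) = p.2 j := by
  simp [prodMap, Fin.append_right, EuclideanSpace.equiv]

lemma prodMap_surj (z : EuclideanSpace ℝ (Fin (n+m))) :
    ∃ p, prodMap n m p = z := by
  refine ⟨(WithLp.toLp 2 (fun i => z (Fin.castAdd m i)), WithLp.toLp 2 (fun j => z (Fin.natAdd n j))), PiLp.ext fun k => ?_⟩
  refine Fin.addCases (fun i => ?_) (fun j => ?_) k
  · rw [prodMap_apply_castAdd]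
  · rw [prodMap_apply_natAdd]

lemma inner_prodMap (p q : EuclideanSpace ℝ (Fin n) × EuclideanSpace ℝ (Fin m)) :
    (inner ℝ (prodMap n m p) (prodMap n m q) : ℝ) = inner ℝ p.1 q.1 + inner ℝ p.2 q.2 := by
  simp only [PiLp.inner_apply, RCLike.inner_apply, starRingEnd_apply]
  rw [Fin.sum_univ_add]
  simp [prodMap_apply_castAdd, prodMap_apply_natAdd, mul_comm]

lemma norm_prodMap_sq (p : EuclideanSpace ℝ (Fin n) × EuclideanSpace ℝ (Fin m)) :
    ‖prodMap n m p‖ ^ 2 = ‖p.1‖ ^ 2 + ‖p.2‖ ^ 2 := by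
  simp only [EuclideanSpace.norm_eq]
  rw [Real.sq_sqrt (by positivity), Real.sq_sqrt (by positivity), Real.sq_sqrt (by positivity),
    Fin.sum_univ_add]
  simp [prodMap_apply_castAdd, prodMap_apply_natAdd]

lemma norm_fst_le' (p : EuclideanSpace ℝ (Fin n) × EuclideanSpace ℝ (Fin m)) :
    ‖p.1‖ ≤ ‖prodMap n m p‖ := by
  have h := norm_prodMap_sq p
  nlinarith [norm_nonneg p.1, norm_nonneg p.2, norm_nonneg (prodMap n m p)]

lemma norm_snd_le' (p : EuclideanSpace ℝ (Fin n) × EuclideanSpace ℝ (Fin m)) :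
    ‖p.2‖ ≤ ‖prodMap n m p‖ := by
  have h := norm_prodMap_sq p
  nlinarith [norm_nonneg p.1, norm_nonneg p.2, norm_nonneg (prodMap n m p)]

lemma norm_prodMap_le (p : EuclideanSpace ℝ (Fin n) × EuclideanSpace ℝ (Fin m)) :
    ‖prodMap n m p‖ ≤ ‖p.1‖ + ‖p.2‖ := by
  have h := norm_prodMap_sq p
  nlinarith [norm_nonneg p.1, norm_nonneg p.2, norm_nonneg (prodMap n m p), mul_nonneg (norm_nonneg p.1) (norm_nonneg p.2)]

lemma continuous_prodMap : Continuous (prodMap n m) := by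
  have : Continuous fun (p : EuclideanSpace ℝ (Fin n) × EuclideanSpace ℝ (Fin m)) =>
      (prodMap n m p).ofLp := by
    apply continuous_pi
    intro k
    refine Fin.addCases (fun i => ?_) (fun j => ?_) k
    · simp only [prodMap_apply_castAdd]
      exact ((continuous_apply i).comp (PiLp.continuous_ofLp 2 _)).comp continuous_fst
    · simp only [prodMap_apply_natAdd]
      exact ((continuous_apply j).comp (PiLp.continuous_ofLp 2 _)).comp continuous_snd
  exact (PiLp.continuous_toLp 2 (fun _ : Fin (n+m) => ℝ)).comp this

lemma measurable_prodMap : Measurable (prodMap n m) :=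
  continuous_prodMap.measurable



lemma mft_abs_le (μ : Measure (EuclideanSpace ℝ (Fin n))) [IsFiniteMeasure μ]
    (ξ : EuclideanSpace ℝ (Fin n)) : ‖mft μ ξ‖ ≤ (μ univ).toReal := by
  have : ‖mft μ ξ‖ = ‖mft μ ξ‖ := rfl
  rw [this, mft]
  calc ‖∫ x, Complex.exp (((-2 * Real.pi * inner ℝ x ξ : ℝ) : ℂ) * Complex.I) ∂μ‖
      ≤ 1 * (μ univ).toReal := by
        apply norm_integral_le_of_norm_le_const
        filter_upwards with x
        rw [show ‖Complex.exp (((-2 * Real.pi * inner ℝ x ξ : ℝ) : ℂ) * Complex.I)‖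
          = ‖_‖ from rfl, Complex.norm_exp_ofReal_mul_I]
    _ = (μ univ).toReal := one_mul _

lemma mft_integrand_continuous (ξ : EuclideanSpace ℝ (Fin n)) :
    Continuous (fun x : EuclideanSpace ℝ (Fin n) =>
      Complex.exp (((-2 * Real.pi * inner ℝ x ξ : ℝ) : ℂ) * Complex.I)) := by
  apply Complex.continuous_exp.comp
  apply Continuous.mul _ continuous_const
  apply Complex.continuous_ofReal.comp
  exact (continuous_const.mul (continuous_id.inner continuous_const))


noncomputable def projFst (z : EuclideanSpace ℝ (Fin (n + m))) : EuclideanSpace ℝ (Fin n) :=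
  (EuclideanSpace.equiv (Fin n) ℝ).symm
    (fun i => (EuclideanSpace.equiv (Fin (n + m)) ℝ z) (Fin.castAdd m i))

lemma projFst_apply (z : EuclideanSpace ℝ (Fin (n + m))) (i : Fin n) :
    projFst z i = z (Fin.castAdd m i) := by simp [projFst, EuclideanSpace.equiv]

lemma continuous_projFst : Continuous (projFst (n := n) (m := m)) := by
  have : Continuous fun (z : EuclideanSpace ℝ (Fin (n+m))) => (projFst z).ofLp := by
    apply continuous_pi
    intro i
    simp only [projFst_apply]
    exact (continuous_apply (Fin.castAdd m i)).comp (PiLp.continuous_ofLp 2 _)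
  exact (PiLp.continuous_toLp 2 (fun _ : Fin n => ℝ)).comp this

lemma projFst_prodMap (p : EuclideanSpace ℝ (Fin n) × EuclideanSpace ℝ (Fin m)) :
    projFst (prodMap n m p) = p.1 := by
  ext i
  rw [projFst_apply, prodMap_apply_castAdd]

lemma inner_projFst (z : EuclideanSpace ℝ (Fin (n + m))) (ξ : EuclideanSpace ℝ (Fin n)) :
    (inner ℝ (projFst z) ξ : ℝ) = inner ℝ z (prodMap n m (ξ, 0)) := by
  simp only [PiLp.inner_apply, RCLike.inner_apply, starRingEnd_apply]
  rw [Fin.sum_univ_add]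
  simp [projFst_apply, prodMap_apply_castAdd, prodMap_apply_natAdd]

lemma norm_prodMap_zero (ξ : EuclideanSpace ℝ (Fin n)) :
    ‖prodMap n m (ξ, 0)‖ = ‖ξ‖ := by
  have h := norm_prodMap_sq (n := n) (m := m) (ξ, 0)
  simp only [norm_zero] at h
  nlinarith [norm_nonneg ξ, norm_nonneg (prodMap n m (ξ, (0 : EuclideanSpace ℝ (Fin m))))]

lemma mft_map_projFst (ρ : Measure (EuclideanSpace ℝ (Fin (n + m))))
    (ξ : EuclideanSpace ℝ (Fin n)) :
    mft (Measure.map projFst ρ) ξ = mft ρ (prodMap n m (ξ, 0)) := by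
  rw [mft, integral_map continuous_projFst.aemeasurable
    (mft_integrand_continuous ξ).aestronglyMeasurable, mft]
  congr 1
  funext z
  rw [inner_projFst]

lemma mft_map_prodMap (μ : Measure (EuclideanSpace ℝ (Fin n)))
    (ν : Measure (EuclideanSpace ℝ (Fin m))) [SFinite μ] [SFinite ν]
    (ξ : EuclideanSpace ℝ (Fin n)) (η : EuclideanSpace ℝ (Fin m)) :
    mft (Measure.map (prodMap n m) (μ.prod ν)) (prodMap n m (ξ, η)) = mft μ ξ * mft ν η := by
  rw [mft, integral_map measurable_prodMap.aemeasurable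
    (mft_integrand_continuous _).aestronglyMeasurable]
  have : ∀ p : EuclideanSpace ℝ (Fin n) × EuclideanSpace ℝ (Fin m),
      Complex.exp (((-2 * Real.pi * inner ℝ (prodMap n m p) (prodMap n m (ξ, η)) : ℝ) : ℂ) * Complex.I)
      = Complex.exp (((-2 * Real.pi * inner ℝ p.1 ξ : ℝ) : ℂ) * Complex.I) *
        Complex.exp (((-2 * Real.pi * inner ℝ p.2 η : ℝ) : ℂ) * Complex.I) := by
    intro p
    rw [← Complex.exp_add, ← add_mul, inner_prodMap]
    norm_num
    ring_nf
  simp only [this]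
  exact integral_prod_mul (L := ℂ)
    (fun x => Complex.exp (((-2 * Real.pi * inner ℝ x ξ : ℝ) : ℂ) * Complex.I))
    (fun y => Complex.exp (((-2 * Real.pi * inner ℝ y η : ℝ) : ℂ) * Complex.I))

noncomputable def projSnd (z : EuclideanSpace ℝ (Fin (n + m))) : EuclideanSpace ℝ (Fin m) :=
  (EuclideanSpace.equiv (Fin m) ℝ).symm
    (fun j => (EuclideanSpace.equiv (Fin (n + m)) ℝ z) (Fin.natAdd n j))

lemma projSnd_apply (z : EuclideanSpace ℝ (Fin (n + m))) (j : Fin m) :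
    projSnd z j = z (Fin.natAdd n j) := by simp [projSnd, EuclideanSpace.equiv]

lemma continuous_projSnd : Continuous (projSnd (n := n) (m := m)) := by
  have : Continuous fun (z : EuclideanSpace ℝ (Fin (n+m))) => (projSnd z).ofLp := by
    apply continuous_pi
    intro j
    simp only [projSnd_apply]
    exact (continuous_apply (Fin.natAdd n j)).comp (PiLp.continuous_ofLp 2 _)
  exact (PiLp.continuous_toLp 2 (fun _ : Fin m => ℝ)).comp this

lemma projSnd_prodMap (p : EuclideanSpace ℝ (Fin n) × EuclideanSpace ℝ (Fin m)) :
    projSnd (prodMap n m p) = p.2 := by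
  ext j
  rw [projSnd_apply, prodMap_apply_natAdd]

lemma inner_projSnd (z : EuclideanSpace ℝ (Fin (n + m))) (η : EuclideanSpace ℝ (Fin m)) :
    (inner ℝ (projSnd z) η : ℝ) = inner ℝ z (prodMap n m (0, η)) := by
  simp only [PiLp.inner_apply, RCLike.inner_apply, starRingEnd_apply]
  rw [Fin.sum_univ_add]
  simp [projSnd_apply, prodMap_apply_castAdd, prodMap_apply_natAdd]

lemma norm_prodMap_zero' (η : EuclideanSpace ℝ (Fin m)) :
    ‖prodMap n m ((0 : EuclideanSpace ℝ (Fin n)), η)‖ = ‖η‖ := by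
  have h := norm_prodMap_sq (n := n) (m := m) (0, η)
  simp only [norm_zero] at h
  nlinarith [norm_nonneg η, norm_nonneg (prodMap n m ((0 : EuclideanSpace ℝ (Fin n)), η))]

lemma mft_map_projSnd (ρ : Measure (EuclideanSpace ℝ (Fin (n + m))))
    (η : EuclideanSpace ℝ (Fin m)) :
    mft (Measure.map projSnd ρ) η = mft ρ (prodMap n m (0, η)) := by
  rw [mft, integral_map continuous_projSnd.aemeasurable
    (mft_integrand_continuous η).aestronglyMeasurable, mft]
  congr 1
  funext z
  rw [inner_projSnd]

lemma decay_mono_exp {u s x a C M : ℝ} (hu0 : 0 ≤ u) (hus : u ≤ s)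
    (hx : 0 ≤ x) (ha : 0 ≤ a) (haM : a ≤ M) (hC : x ^ (s/2) * a ≤ C) :
    x ^ (u/2) * a ≤ max C M := by
  rcases le_or_gt x 1 with h1 | h1
  · have : x ^ (u/2) * a ≤ 1 * M := by
      apply mul_le_mul (Real.rpow_le_one hx h1 (by linarith)) haM ha zero_le_one
    calc x ^ (u/2) * a ≤ M := by linarith
      _ ≤ max C M := le_max_right _ _
  · have : x ^ (u/2) * a ≤ x ^ (s/2) * a := by
      apply mul_le_mul_of_nonneg_right (Real.rpow_le_rpow_of_exponent_le h1.le (by linarith)) ha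
    calc x ^ (u/2) * a ≤ C := by linarith
      _ ≤ max C M := le_max_left _ _

lemma key_ineq {u s x y a b C M N z : ℝ} (hu0 : 0 ≤ u) (hus : u ≤ s)
    (hx : 0 ≤ x) (_hy : 0 ≤ y) (hyx : y ≤ x) (ha : 0 ≤ a) (hb : 0 ≤ b)
    (haM : a ≤ M) (hbN : b ≤ N) (hC : x ^ (s/2) * a ≤ C)
    (hz0 : 0 ≤ z) (hz : z ≤ x + y) :
    z ^ (u/2) * (a * b) ≤ max ((2:ℝ) ^ (u/2) * (M * N)) ((2:ℝ) ^ (u/2) * (C * N)) := by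
  have hM : 0 ≤ M := ha.trans haM
  have hN : 0 ≤ N := hb.trans hbN
  have hC0 : 0 ≤ C := le_trans (by positivity) hC
  have h2 : (0:ℝ) ≤ (2:ℝ) ^ (u/2) := Real.rpow_nonneg (by norm_num) _
  rcases le_or_gt x 1 with h1 | h1
  · have hz2 : z ≤ 2 := by linarith
    have : z ^ (u/2) ≤ (2:ℝ) ^ (u/2) := Real.rpow_le_rpow hz0 hz2 (by linarith)
    refine le_trans ?_ (le_max_left _ _)
    have hab : a * b ≤ M * N := mul_le_mul haM hbN hb hM
    calc z ^ (u/2) * (a * b) ≤ (2:ℝ) ^ (u/2) * (a*b) :=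
          mul_le_mul_of_nonneg_right this (by positivity)
      _ ≤ (2:ℝ) ^ (u/2) * (M * N) := mul_le_mul_of_nonneg_left hab h2
  · have hz2 : z ≤ 2 * x := by linarith
    have h1' : z ^ (u/2) ≤ (2*x) ^ (u/2) := Real.rpow_le_rpow hz0 hz2 (by linarith)
    have h2' : (2*x) ^ (u/2) = (2:ℝ)^(u/2) * x^(u/2) := Real.mul_rpow (by norm_num) hx
    have h3' : x ^ (u/2) ≤ x ^ (s/2) :=
      Real.rpow_le_rpow_of_exponent_le h1.le (by linarith)
    refine le_trans ?_ (le_max_right _ _)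
    calc z ^ (u/2) * (a * b) ≤ (2:ℝ)^(u/2) * x^(u/2) * (a*b) := by
          rw [← h2']; exact mul_le_mul_of_nonneg_right h1' (by positivity)
      _ ≤ (2:ℝ)^(u/2) * x^(s/2) * (a*b) := by
          apply mul_le_mul_of_nonneg_right _ (by positivity)
          exact mul_le_mul_of_nonneg_left h3' h2
      _ = (2:ℝ)^(u/2) * ((x^(s/2)*a) * b) := by ring
      _ ≤ (2:ℝ)^(u/2) * (C * N) := by
          apply mul_le_mul_of_nonneg_left _ h2
          exact mul_le_mul hC hbN hb hC0

def FDset {n : ℕ} (A : Set (EuclideanSpace ℝ (Fin n))) : Set ℝ :=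
  {s : ℝ | 0 ≤ s ∧ s ≤ (n : ℝ) ∧
    ∃ μ : Measure (EuclideanSpace ℝ (Fin n)), IsFiniteMeasure μ ∧ μ ≠ 0 ∧ μ Aᶜ = 0 ∧
      ∃ C : ℝ, ∀ ξ : EuclideanSpace ℝ (Fin n), ‖ξ‖ ^ (s / 2) * ‖mft μ ξ‖ ≤ C}

lemma fourierDim_eq {n : ℕ} (A : Set (EuclideanSpace ℝ (Fin n))) :
    fourierDim A = sSup (FDset A) := rfl

lemma FDset_bddAbove {n : ℕ} (A : Set (EuclideanSpace ℝ (Fin n))) : BddAbove (FDset A) :=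
  ⟨n, fun _ hx => hx.2.1⟩

lemma fourierDim_nonneg {n : ℕ} (A : Set (EuclideanSpace ℝ (Fin n))) : 0 ≤ fourierDim A :=
  Real.sSup_nonneg (fun _ hx => hx.1)

lemma prod_mem' {S : Set (EuclideanSpace ℝ (Fin n))} {T : Set (EuclideanSpace ℝ (Fin m))}
    (hS : IsCompact S) (hT : IsCompact T) {s t : ℝ}
    (hs : s ∈ FDset S) (ht : t ∈ FDset T) :
    min s t ∈ FDset (prodMap n m '' (S ×ˢ T)) := by
  obtain ⟨hs0, hsn, μ, hμfin, hμ0, hμS, Cs, hCs⟩ := hs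
  obtain ⟨ht0, htm, ν, hνfin, hν0, hνT, Ct, hCt⟩ := ht
  set ρ := (μ.prod ν).map (prodMap n m) with hρ
  set Mμ := (μ univ).toReal
  set Mν := (ν univ).toReal
  set u := min s t with hu
  have hu0 : 0 ≤ u := le_min hs0 ht0
  refine ⟨hu0, ?_, ρ, inferInstance, ?_, ?_, ?_⟩
  · calc u ≤ s := min_le_left _ _
      _ ≤ (n : ℝ) := hsn
      _ ≤ ((n + m : ℕ) : ℝ) := by push_cast; linarith [Nat.cast_nonneg (α := ℝ) m]
  · intro h
    have h1 : ρ univ = 0 := by rw [h]; simp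
    rw [hρ, Measure.map_apply measurable_prodMap MeasurableSet.univ, preimage_univ,
      ← univ_prod_univ, Measure.prod_prod] at h1
    rcases mul_eq_zero.mp h1 with h2 | h2
    · exact hμ0 (Measure.measure_univ_eq_zero.mp h2)
    · exact hν0 (Measure.measure_univ_eq_zero.mp h2)
  · have hA : IsCompact (prodMap n m '' (S ×ˢ T)) := (hS.prod hT).image continuous_prodMap
    rw [hρ, Measure.map_apply measurable_prodMap hA.isClosed.measurableSet.compl]
    refine measure_mono_null (fun p hp hpS => hp (mem_image_of_mem _ hpS)) ?_
    show (μ.prod ν) ((S ×ˢ T)ᶜ) = 0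
    rw [compl_prod_eq_union]
    apply measure_union_null <;> rw [Measure.prod_prod] <;> simp [hμS, hνT]
  · refine ⟨max (max ((2:ℝ) ^ (u/2) * (Mμ * Mν)) ((2:ℝ) ^ (u/2) * (Cs * Mν)))
      (max ((2:ℝ) ^ (u/2) * (Mν * Mμ)) ((2:ℝ) ^ (u/2) * (Ct * Mμ))), fun ζ => ?_⟩
    obtain ⟨p, rfl⟩ := prodMap_surj ζ
    have hfact : mft ρ (prodMap n m p) = mft μ p.1 * mft ν p.2 := by
      rw [hρ, show p = (p.1, p.2) from rfl]
      exact mft_map_prodMap μ ν p.1 p.2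
    rw [hfact, norm_mul]
    have haM : ‖mft μ p.1‖ ≤ Mμ := mft_abs_le μ p.1
    have hbN : ‖mft ν p.2‖ ≤ Mν := mft_abs_le ν p.2
    rcases le_total ‖p.2‖ ‖p.1‖ with hcmp | hcmp
    · refine le_trans (key_ineq hu0 (min_le_left s t) (norm_nonneg _) (norm_nonneg _) hcmp
        (norm_nonneg _) (norm_nonneg _) haM hbN (hCs p.1)
        (norm_nonneg _) (norm_prodMap_le p)) (le_max_left _ _)
    · rw [mul_comm (‖mft μ p.1‖)]
      refine le_trans (key_ineq hu0 (min_le_right s t) (norm_nonneg _) (norm_nonneg _) hcmp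
        (norm_nonneg _) (norm_nonneg _) hbN haM (hCt p.2)
        (norm_nonneg _) ((norm_prodMap_le p).trans (le_of_eq (add_comm _ _)))) (le_max_right _ _)

lemma projFst_mem {S : Set (EuclideanSpace ℝ (Fin n))} {T : Set (EuclideanSpace ℝ (Fin m))}
    (hS : IsCompact S) {u v : ℝ} (hu : u ∈ FDset (prodMap n m '' (S ×ˢ T)))
    (hv0 : 0 ≤ v) (hvu : v ≤ u) (hvn : v ≤ (n : ℝ)) : v ∈ FDset S := by
  obtain ⟨hu0, hunm, ρ, hρfin, hρ0, hρA, C, hC⟩ := hu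
  set μ := ρ.map projFst with hμ
  refine ⟨hv0, hvn, μ, inferInstance, ?_, ?_, ?_⟩
  · intro h
    have h1 : μ univ = 0 := by rw [h]; simp
    rw [hμ, Measure.map_apply continuous_projFst.measurable MeasurableSet.univ,
      preimage_univ] at h1
    exact hρ0 (Measure.measure_univ_eq_zero.mp h1)
  · rw [hμ, Measure.map_apply continuous_projFst.measurable hS.isClosed.measurableSet.compl]
    refine measure_mono_null ?_ hρA
    rintro z hz ⟨p, hp, rfl⟩
    exact hz (by rw [projFst_prodMap]; exact hp.1)
  · refine ⟨max C (μ univ).toReal, fun ξ => ?_⟩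
    have hfact : mft μ ξ = mft ρ (prodMap n m (ξ, 0)) := mft_map_projFst ρ ξ
    have hd : ‖ξ‖ ^ (u/2) * ‖mft μ ξ‖ ≤ C := by
      rw [hfact, ← norm_prodMap_zero (m := m) ξ]
      exact hC _
    exact decay_mono_exp hv0 hvu (norm_nonneg _) (norm_nonneg _) (mft_abs_le μ ξ) hd

lemma projSnd_mem {S : Set (EuclideanSpace ℝ (Fin n))} {T : Set (EuclideanSpace ℝ (Fin m))}
    (hT : IsCompact T) {u v : ℝ} (hu : u ∈ FDset (prodMap n m '' (S ×ˢ T)))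
    (hv0 : 0 ≤ v) (hvu : v ≤ u) (hvm : v ≤ (m : ℝ)) : v ∈ FDset T := by
  obtain ⟨hu0, hunm, ρ, hρfin, hρ0, hρA, C, hC⟩ := hu
  set μ := ρ.map projSnd with hμ
  refine ⟨hv0, hvm, μ, inferInstance, ?_, ?_, ?_⟩
  · intro h
    have h1 : μ univ = 0 := by rw [h]; simp
    rw [hμ, Measure.map_apply continuous_projSnd.measurable MeasurableSet.univ,
      preimage_univ] at h1
    exact hρ0 (Measure.measure_univ_eq_zero.mp h1)
  · rw [hμ, Measure.map_apply continuous_projSnd.measurable hT.isClosed.measurableSet.compl]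
    refine measure_mono_null ?_ hρA
    rintro z hz ⟨p, hp, rfl⟩
    exact hz (by rw [projSnd_prodMap]; exact hp.2)
  · refine ⟨max C (μ univ).toReal, fun η => ?_⟩
    have hfact : mft μ η = mft ρ (prodMap n m (0, η)) := mft_map_projSnd ρ η
    have hd : ‖η‖ ^ (u/2) * ‖mft μ η‖ ≤ C := by
      rw [hfact, ← norm_prodMap_zero' (n := n) η]
      exact hC _
    exact decay_mono_exp hv0 hvu (norm_nonneg _) (norm_nonneg _) (mft_abs_le μ η) hd


/-- For compact `S ⊆ ℝ^n`, `T ⊆ ℝ^m` with `dim_F S < n` and `dim_F T < m`,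
`dim_F(S × T) = min(dim_F S, dim_F T)`. -/
theorem statement12 (n m : ℕ)
    (S : Set (EuclideanSpace ℝ (Fin n))) (T : Set (EuclideanSpace ℝ (Fin m)))
    (hS : IsCompact S) (hT : IsCompact T)
    (hSd : fourierDim S < (n : ℝ)) (hTd : fourierDim T < (m : ℝ)) :
    fourierDim (prodMap n m '' (S ×ˢ T)) = min (fourierDim S) (fourierDim T) := by
  have hdS0 := fourierDim_nonneg S
  have hdT0 := fourierDim_nonneg T
  have hdA0 := fourierDim_nonneg (prodMap n m '' (S ×ˢ T))
  apply le_antisymm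
  · rw [fourierDim_eq]
    apply Real.sSup_le _ (le_min hdS0 hdT0)
    intro u hu
    have hu0 : 0 ≤ u := hu.1
    refine le_min ?_ ?_
    · by_contra h
      push_neg at h
      rcases le_or_gt u (n : ℝ) with hn | hn
      · have : u ∈ FDset S := projFst_mem hS hu hu0 le_rfl hn
        exact absurd (le_csSup (FDset_bddAbove S) this) (not_le.mpr h)
      · have : (n : ℝ) ∈ FDset S := projFst_mem hS hu (Nat.cast_nonneg n) hn.le le_rfl
        exact absurd (le_csSup (FDset_bddAbove S) this) (not_le.mpr hSd)
    · by_contra h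
      push_neg at h
      rcases le_or_gt u (m : ℝ) with hn | hn
      · have : u ∈ FDset T := projSnd_mem hT hu hu0 le_rfl hn
        exact absurd (le_csSup (FDset_bddAbove T) this) (not_le.mpr h)
      · have : (m : ℝ) ∈ FDset T := projSnd_mem hT hu (Nat.cast_nonneg m) hn.le le_rfl
        exact absurd (le_csSup (FDset_bddAbove T) this) (not_le.mpr hTd)
  · rcases eq_empty_or_nonempty (FDset S) with hSe | hSne
    · have : fourierDim S = 0 := by rw [fourierDim_eq, hSe, Real.sSup_empty]
      calc min (fourierDim S) (fourierDim T) ≤ fourierDim S := min_le_left _ _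
        _ = 0 := this
        _ ≤ _ := hdA0
    rcases eq_empty_or_nonempty (FDset T) with hTe | hTne
    · have : fourierDim T = 0 := by rw [fourierDim_eq, hTe, Real.sSup_empty]
      calc min (fourierDim S) (fourierDim T) ≤ fourierDim T := min_le_right _ _
        _ = 0 := this
        _ ≤ _ := hdA0
    by_contra h
    push_neg at h
    have h1 : fourierDim (prodMap n m '' (S ×ˢ T)) < fourierDim S :=
      lt_of_lt_of_le h (min_le_left _ _)
    have h2 : fourierDim (prodMap n m '' (S ×ˢ T)) < fourierDim T :=
      lt_of_lt_of_le h (min_le_right _ _)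
    rw [fourierDim_eq S] at h1
    rw [fourierDim_eq T] at h2
    obtain ⟨s, hsmem, hs⟩ := exists_lt_of_lt_csSup hSne h1
    obtain ⟨t, htmem, ht⟩ := exists_lt_of_lt_csSup hTne h2
    have hmem := prod_mem' hS hT hsmem htmem
    have : min s t ≤ fourierDim (prodMap n m '' (S ×ˢ T)) := by
      rw [fourierDim_eq]
      exact le_csSup (FDset_bddAbove _) hmem
    have : fourierDim (prodMap n m '' (S ×ˢ T)) < min s t := lt_min hs ht
    linarith
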